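/- Let n ≥ 4. The map κ : E_0 → E(n) defined by κ(none) = none and κ(some (ε, p)) = some (ε, φ(p)), where φ(1,1) = (1,1), φ(1,2) = (1,2), φ(2,1) = (2,1), φ(2,2) = (2,2), φ(3,3) = (n−1,n−1), φ(3,4) = (n−1,n), φ(4,3) = (n,n−1), φ(4,4) = (n,n), is injective and preserves ∔, − and 0, and it is a splittable injection: there exists a map λ : E(n) → E_0 preserving ∔, − and 0 with λ ∘ κ = id on E_0. -/

import Mathlib

open scoped Classical

def Sset (n : ℕ) : Set (ℕ × ℕ) :=
  {p | 1 ≤ p.1 ∧ p.1 ≤ n ∧ 1 ≤ p.2 ∧ p.2 ≤ n ∧ p.1 ≤ p.2 + 1 ∧ p.2 ≤ p.1 + 2}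

/-- `S(n)` as a sublattice of `ℕ × ℕ` (componentwise max and min). -/
def SL (n : ℕ) : Sublattice (ℕ × ℕ) where
  carrier := Sset n
  supClosed' := by
    rintro ⟨i, k⟩ h1 ⟨l, m⟩ h2
    simp only [Sset, Set.mem_setOf_eq, Prod.sup_def] at h1 h2 ⊢
    omega
  infClosed' := by
    rintro ⟨i, k⟩ h1 ⟨l, m⟩ h2
    simp only [Sset, Set.mem_setOf_eq, Prod.inf_def] at h1 h2 ⊢
    omega

/-- `D(n) = WithBot S(n)`: `S(n)` with a bottom element `O` adjoined. -/
abbrev Dn (n : ℕ) : Type := WithBot ↥(SL n)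

/-- The element `a_{ik}` of `D(n)` (junk value `⊥` if `(i,k) ∉ S(n)`). -/
noncomputable def aElt (n i k : ℕ) : Dn n :=
  if h : (i, k) ∈ SL n then (↑(⟨(i, k), h⟩ : ↥(SL n)) : Dn n) else ⊥

/-- The 8-element sublattice of `ℕ × ℕ` underlying `D_0`. -/
def SL0 : Sublattice (ℕ × ℕ) where
  carrier := {(1,1),(1,2),(2,1),(2,2),(3,3),(3,4),(4,3),(4,4)}
  supClosed' := by
    intro a ha b hb
    simp only [Set.mem_insert_iff, Set.mem_singleton_iff] at *
    rcases ha with rfl|rfl|rfl|rfl|rfl|rfl|rfl|rfl <;>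
      rcases hb with rfl|rfl|rfl|rfl|rfl|rfl|rfl|rfl <;> decide
  infClosed' := by
    intro a ha b hb
    simp only [Set.mem_insert_iff, Set.mem_singleton_iff] at *
    rcases ha with rfl|rfl|rfl|rfl|rfl|rfl|rfl|rfl <;>
      rcases hb with rfl|rfl|rfl|rfl|rfl|rfl|rfl|rfl <;> decide

/-- The 9-element B-module `D_0` (with bottom element `O` adjoined). -/
abbrev D0 : Type := WithBot ↥SL0

/-- The element `A_{ik}` of `D_0` (junk value `⊥` if `(i,k)` is not in the lattice). -/
noncomputable def A0 (i k : ℕ) : D0 :=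
  if h : (i, k) ∈ SL0 then (↑(⟨(i, k), h⟩ : ↥SL0) : D0) else ⊥

/-- F∞-module structure on `Option (Bool × α)` for a meet-semilattice `α`. -/
abbrev Emod (α : Type) : Type := Option (Bool × α)

/-- Negation: `−none = none`, `−some (ε, p) = some (¬ε, p)`. -/
def Emod.neg {α : Type} : Emod α → Emod α :=
  Option.map (fun p => (!p.1, p.2))

/-- Addition: `x ∔ none = none ∔ x = none`, and
`some (ε, p) ∔ some (ε', q) = some (ε, p ⊓ q)` if `ε = ε'`, `none` otherwise. -/
noncomputable def Emod.add {α : Type} [SemilatticeInf α] : Emod α → Emod α → Emod α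
  | some (ε, p), some (ε', q) => if ε = ε' then some (ε, p ⊓ q) else none
  | _, _ => none

/-- Nonzero vectors of the free F∞-module of rank `m`. -/
abbrev FVec (m : ℕ) : Type := {σ : Fin m → Option Bool // σ ≠ fun _ => none}

/-- The free F∞-module of rank `m`, with zero `none`. -/
abbrev Fm (m : ℕ) : Type := Option (FVec m)

/-- Negation on the free F∞-module: Boolean negation on each defined value. -/
def Fm.neg {m : ℕ} : Fm m → Fm m :=
  Option.map (fun σ => ⟨fun i => (σ.val i).map (fun b => !b), by
    intro hcontra
    apply σ.prop
    funext i
    have h := congrFun hcontra i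
    simpa using h⟩)

/-- Addition on the free F∞-module: `none` absorbs; two nonzero vectors add to `none`
if they clash in some coordinate, and otherwise to their pointwise merge. -/
noncomputable def Fm.add {m : ℕ} : Fm m → Fm m → Fm m
  | some σ, some τ =>
      if ∃ (i : Fin m) (b : Bool), σ.val i = some b ∧ τ.val i = some (!b) then none
      else some ⟨fun i => (σ.val i).or (τ.val i), by
        intro hcontra
        apply σ.prop
        funext i
        have h := congrFun hcontra i
        cases hv : σ.val i with
        | none => rfl
        | some b => rw [hv] at h; simp [Option.or] at h⟩
  | _, _ => none

/-- A type with F∞-module operations `0`, `∔`, `−`. -/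
class FStr (α : Type) where
  z : α
  add : α → α → α
  neg : α → α

noncomputable instance {α : Type} [SemilatticeInf α] : FStr (Emod α) :=
  ⟨none, Emod.add, Emod.neg⟩

noncomputable instance {m : ℕ} : FStr (Fm m) :=
  ⟨none, Fm.add, Fm.neg⟩

/-- A map preserving `0`, `∔` and `−`. -/
def IsFHom {α β : Type} [FStr α] [FStr β] (f : α → β) : Prop :=
  f FStr.z = FStr.z ∧ (∀ x y, f (FStr.add x y) = FStr.add (f x) (f y)) ∧
    ∀ x, f (FStr.neg x) = FStr.neg (f x)

/-- The F∞-module `E(n) = Option (Bool × S(n))`. -/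
abbrev En (n : ℕ) : Type := Emod ↥(SL n)

/-- The F∞-module `E_0 = Option (Bool × S_0)`. -/
abbrev E0 : Type := Emod ↥SL0

/-- The element `some (ε, (i,k))` of `E(n)` (junk value `none` if `(i,k) ∉ S(n)`). -/
noncomputable def eElt (n : ℕ) (ε : Bool) (i k : ℕ) : En n :=
  if h : (i, k) ∈ SL n then some (ε, ⟨(i, k), h⟩) else none

/-- The element `some (ε, (i,k))` of `E_0` (junk value `none` if `(i,k) ∉ S_0`). -/
noncomputable def eElt0 (ε : Bool) (i k : ℕ) : E0 :=
  if h : (i, k) ∈ SL0 then some (ε, ⟨(i, k), h⟩) else none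

section Aux

variable {α β : Type} [SemilatticeInf α] [SemilatticeInf β]

lemma emodMap_isFHom (f : α → β) (hf : ∀ a b, f (a ⊓ b) = f a ⊓ f b) :
    IsFHom (Option.map (fun p : Bool × α => (p.1, f p.2)) : Emod α → Emod β) := by
  refine ⟨rfl, ?_, ?_⟩
  · rintro (_ | ⟨ε, p⟩) (_ | ⟨ε', q⟩) <;>
      simp only [Emod.add, Option.map_none, Option.map_some, FStr.add]
    split <;> simp_all [Emod.add, hf]
  · rintro (_ | ⟨ε, p⟩) <;> rfl

set_option linter.unusedSectionVars false in
lemma emodMap_leftInv (f : α → β) (g : β → α) (hgf : ∀ a, g (f a) = a) :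
    ∀ x : Emod α,
      Option.map (fun p : Bool × β => (p.1, g p.2))
        (Option.map (fun p : Bool × α => (p.1, f p.2)) x) = x := by
  rintro (_ | ⟨ε, p⟩) <;> simp [hgf]

end Aux

lemma mem_SL0_iff (p : ℕ × ℕ) :
    p ∈ SL0 ↔ p = (1,1) ∨ p = (1,2) ∨ p = (2,1) ∨ p = (2,2) ∨
      p = (3,3) ∨ p = (3,4) ∨ p = (4,3) ∨ p = (4,4) := by
  change p ∈ ({(1,1),(1,2),(2,1),(2,2),(3,3),(3,4),(4,3),(4,4)} : Set (ℕ × ℕ)) ↔ _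
  simp [Set.mem_insert_iff]

lemma mem_SL_iff (n : ℕ) (p : ℕ × ℕ) :
    p ∈ SL n ↔ 1 ≤ p.1 ∧ p.1 ≤ n ∧ 1 ≤ p.2 ∧ p.2 ≤ n ∧ p.1 ≤ p.2 + 1 ∧ p.2 ≤ p.1 + 2 :=
  Iff.rfl

/-- The coordinate map of `φ`. -/
def hmap (n x : ℕ) : ℕ := if x ≤ 2 then x else x + n - 4

/-- The underlying pair map of `φ`. -/
def phiP (n : ℕ) (p : ℕ × ℕ) : ℕ × ℕ := (hmap n p.1, hmap n p.2)

/-- The underlying pair map of `λ`. -/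
noncomputable def lamP (n : ℕ) (p : ℕ × ℕ) : ℕ × ℕ :=
  if n - 1 ≤ p.1 ∧ n - 1 ≤ p.2 then (p.1 - (n - 4), p.2 - (n - 4))
  else (min p.1 2, min p.2 2)

lemma hmap_min (n x y : ℕ) (hn : 4 ≤ n) : hmap n (min x y) = min (hmap n x) (hmap n y) := by
  unfold hmap; split_ifs <;> omega

lemma phiP_mem (n : ℕ) (hn : 4 ≤ n) {p : ℕ × ℕ} (hp : p ∈ SL0) : phiP n p ∈ SL n := by
  rw [mem_SL0_iff] at hp
  rw [mem_SL_iff]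
  rcases hp with rfl|rfl|rfl|rfl|rfl|rfl|rfl|rfl <;>
    · unfold phiP hmap; dsimp only; split_ifs <;> omega

lemma lamP_mem (n : ℕ) (hn : 4 ≤ n) {p : ℕ × ℕ} (hp : p ∈ SL n) : lamP n p ∈ SL0 := by
  rw [mem_SL_iff] at hp
  rw [mem_SL0_iff]
  unfold lamP
  split <;> simp only [Prod.ext_iff] <;> omega

lemma phiP_inf (n : ℕ) (hn : 4 ≤ n) (p q : ℕ × ℕ) :
    phiP n (p ⊓ q) = phiP n p ⊓ phiP n q := by
  rcases p with ⟨a, b⟩; rcases q with ⟨c, d⟩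
  simp only [phiP, Prod.inf_def, Prod.mk.injEq]
  exact ⟨hmap_min n a c hn, hmap_min n b d hn⟩

lemma lamP_inf (n : ℕ) (hn : 4 ≤ n) {p q : ℕ × ℕ} (hp : p ∈ SL n) (hq : q ∈ SL n) :
    lamP n (p ⊓ q) = lamP n p ⊓ lamP n q := by
  rw [mem_SL_iff] at hp hq
  rcases p with ⟨a, b⟩; rcases q with ⟨c, d⟩
  simp only [lamP, Prod.inf_def] at *
  split_ifs <;> simp only [Prod.mk.injEq, Prod.inf_def] <;> omega

lemma lamP_phiP (n : ℕ) (hn : 4 ≤ n) {p : ℕ × ℕ} (hp : p ∈ SL0) :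
    lamP n (phiP n p) = p := by
  rw [mem_SL0_iff] at hp
  rcases hp with rfl|rfl|rfl|rfl|rfl|rfl|rfl|rfl <;>
    · unfold phiP hmap lamP; dsimp only; split_ifs <;> simp only [Prod.mk.injEq] <;> omega

/-- For `n ≥ 4`, the map `κ : E_0 → E(n)` given by `κ(none) = none` and
`κ(some (ε, p)) = some (ε, φ(p))`, with `φ` fixing `(1,1),(1,2),(2,1),(2,2)` and
sending `(3,3),(3,4),(4,3),(4,4)` to `(n−1,n−1),(n−1,n),(n,n−1),(n,n)`, is injective
and preserves `∔`, `−` and `0`, and admits a left inverse `λ : E(n) → E_0` that also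
preserves `∔`, `−` and `0`. -/
theorem stmt7 (n : ℕ) (hn : 4 ≤ n) :
    ∃ κ : E0 → En n,
      IsFHom κ ∧ Function.Injective κ ∧
      κ none = none ∧
      (∀ ε : Bool,
        κ (eElt0 ε 1 1) = eElt n ε 1 1 ∧
        κ (eElt0 ε 1 2) = eElt n ε 1 2 ∧
        κ (eElt0 ε 2 1) = eElt n ε 2 1 ∧
        κ (eElt0 ε 2 2) = eElt n ε 2 2 ∧
        κ (eElt0 ε 3 3) = eElt n ε (n - 1) (n - 1) ∧
        κ (eElt0 ε 3 4) = eElt n ε (n - 1) n ∧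
        κ (eElt0 ε 4 3) = eElt n ε n (n - 1) ∧
        κ (eElt0 ε 4 4) = eElt n ε n n) ∧
      ∃ lam : En n → E0, IsFHom lam ∧ ∀ x, lam (κ x) = x := by
  set f : ↥SL0 → ↥(SL n) := fun p => ⟨phiP n p.val, phiP_mem n hn p.prop⟩ with hfdef
  set g : ↥(SL n) → ↥SL0 := fun p => ⟨lamP n p.val, lamP_mem n hn p.prop⟩ with hgdef
  have hf : ∀ a b, f (a ⊓ b) = f a ⊓ f b := fun a b =>
    Subtype.ext (phiP_inf n hn a.val b.val)
  have hg : ∀ a b, g (a ⊓ b) = g a ⊓ g b := fun a b =>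
    Subtype.ext (lamP_inf n hn a.prop b.prop)
  have hgf : ∀ a, g (f a) = a := fun a => Subtype.ext (lamP_phiP n hn a.prop)
  refine ⟨Option.map (fun p : Bool × ↥SL0 => (p.1, f p.2)), emodMap_isFHom f hf, ?_, rfl,
    ?_, Option.map (fun p : Bool × ↥(SL n) => (p.1, g p.2)), emodMap_isFHom g hg,
    emodMap_leftInv f g hgf⟩
  · exact Function.LeftInverse.injective (emodMap_leftInv f g hgf)
  · intro ε
    have key : ∀ i k i' k' : ℕ, (i, k) ∈ SL0 → (i', k') ∈ SL n →
        phiP n (i, k) = (i', k') →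
        Option.map (fun p : Bool × ↥SL0 => (p.1, f p.2)) (eElt0 ε i k) = eElt n ε i' k' := by
      intro i k i' k' h0 hn' hphi
      rw [eElt0, dif_pos h0, eElt, dif_pos hn']
      simp only [Option.map_some]
      exact congrArg _ (congrArg _ (Subtype.ext hphi))
    refine ⟨?_, ?_, ?_, ?_, ?_, ?_, ?_, ?_⟩ <;>
      refine key _ _ _ _ (by rw [mem_SL0_iff]; simp)
        (by rw [mem_SL_iff]; refine ⟨?_, ?_, ?_, ?_, ?_, ?_⟩ <;> dsimp only <;> omega)
        (by unfold phiP hmap; dsimp only; split_ifs <;> simp only [Prod.mk.injEq] <;> omega)
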